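/- Let (12/·) denote the unique primitive Dirichlet character modulo 12 (the Kronecker symbol mod 12), and define the Dedekind eta function by η(τ) = (1/2) Σ_{n∈ℤ} (12/n) e^{2πiτ n²/24} for τ ∈ ℂ with Im τ > 0. Then for all τ in the upper half-plane: √(i/τ) · η(−1/τ) = η(τ), where √· is the principal branch of the square root. -/

import Mathlib

open scoped Real
open Complex

/-- The Kronecker symbol `(12/n)`: `1` if `n ≡ ±1 (mod 12)`, `-1` if `n ≡ ±5 (mod 12)`,
`0` otherwise; this is the unique primitive Dirichlet character modulo 12. -/
noncomputable def chiTwelve (n : ℤ) : ℂ :=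
  if n % 12 = 1 ∨ n % 12 = 11 then 1
  else if n % 12 = 5 ∨ n % 12 = 7 then -1
  else 0

/-- The Dedekind eta function, written as
`η(τ) = (1/2) Σ_{n∈ℤ} (12/n) e^{2πiτ n²/24}`. -/
noncomputable def dedekindEta (τ : ℂ) : ℂ :=
  (1 / 2) * ∑' n : ℤ, chiTwelve n * Complex.exp (2 * Real.pi * I * τ * (n : ℂ) ^ 2 / 24)

/- ### Auxiliary material -/

/-- Equiv between `Fin 12 × ℤ` and `ℤ` via `(k, m) ↦ 12 * m + k`. -/
def finIntEquiv : Fin 12 × ℤ ≃ ℤ where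
  toFun p := 12 * p.2 + (p.1 : ℤ)
  invFun n := (⟨(n % 12).toNat, by omega⟩, n / 12)
  left_inv := by rintro ⟨k, m⟩; have := k.isLt; ext <;> simp <;> omega
  right_inv := by intro n; simp; omega

lemma chiTwelve_add_mul (m k : ℤ) : chiTwelve (12 * m + k) = chiTwelve k := by
  have h : (12 * m + k) % 12 = k % 12 := by omega
  simp only [chiTwelve, h]

lemma norm_chiTwelve_le (n : ℤ) : ‖chiTwelve n‖ ≤ 1 := by
  unfold chiTwelve
  split_ifs <;> simp

lemma summable_chi_term {w : ℂ} (hw : 0 < w.im) :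
    Summable (fun n : ℤ ↦ chiTwelve n * Complex.exp (2 * π * I * w * (n:ℂ) ^ 2 / 24)) := by
  have hw12 : 0 < (w / 12).im := by
    rw [div_ofNat_im]; positivity
  have h : Summable (fun n : ℤ ↦ jacobiTheta₂_term n 0 (w / 12)) :=
    (summable_jacobiTheta₂_term_iff 0 (w / 12)).2 hw12
  have hn : Summable (fun n : ℤ ↦ ‖jacobiTheta₂_term n 0 (w / 12)‖) :=
    summable_norm_iff.2 h
  apply Summable.of_norm_bounded hn
  intro n
  rw [norm_mul]
  calc ‖chiTwelve n‖ * ‖Complex.exp (2 * π * I * w * (n:ℂ) ^ 2 / 24)‖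
      ≤ 1 * ‖Complex.exp (2 * π * I * w * (n:ℂ) ^ 2 / 24)‖ := by
        gcongr; exact norm_chiTwelve_le n
    _ = ‖jacobiTheta₂_term n 0 (w / 12)‖ := by
        rw [one_mul, jacobiTheta₂_term]
        congr 2
        ring

lemma term_eq (k : Fin 12) (m : ℤ) (w : ℂ) :
    chiTwelve (finIntEquiv (k, m)) *
      Complex.exp (2 * π * I * w * ((finIntEquiv (k, m) : ℤ):ℂ) ^ 2 / 24)
    = chiTwelve (k : ℤ) * Complex.exp (π * I * ((k:ℤ):ℂ) ^ 2 * w / 12) *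
        jacobiTheta₂_term m ((k:ℤ) * w) (12 * w) := by
  show chiTwelve (12 * m + (k:ℤ)) * _ = _
  rw [chiTwelve_add_mul, jacobiTheta₂_term,
    mul_assoc (chiTwelve (k:ℤ)) _ _, ← Complex.exp_add]
  congr 2
  have h : (finIntEquiv (k, m) : ℤ) = 12 * m + (k : ℤ) := rfl
  rw [h]
  push_cast
  ring

/-- Splitting the eta sum into residue classes mod 12. -/
lemma decompF {w : ℂ} (hw : 0 < w.im) :
    (∑' n : ℤ, chiTwelve n * Complex.exp (2 * π * I * w * (n:ℂ) ^ 2 / 24))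
    = ∑ k : Fin 12, chiTwelve (k : ℤ) * Complex.exp (π * I * ((k:ℤ):ℂ) ^ 2 * w / 12) *
        jacobiTheta₂ ((k:ℤ) * w) (12 * w) := by
  have hsum := summable_chi_term hw
  rw [← finIntEquiv.tsum_eq]
  have hsum' : Summable (fun p : Fin 12 × ℤ ↦
      chiTwelve (finIntEquiv p) *
        Complex.exp (2 * π * I * w * ((finIntEquiv p : ℤ):ℂ) ^ 2 / 24)) :=
    hsum.comp_injective finIntEquiv.injective
  rw [Summable.tsum_prod' hsum' (fun k ↦ hsum'.prod_factor k)]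
  rw [tsum_fintype]
  refine Finset.sum_congr rfl fun k _ ↦ ?_
  have : ∀ m : ℤ, chiTwelve (finIntEquiv (k, m)) *
      Complex.exp (2 * π * I * w * ((finIntEquiv (k, m) : ℤ):ℂ) ^ 2 / 24)
      = chiTwelve (k : ℤ) * Complex.exp (π * I * ((k:ℤ):ℂ) ^ 2 * w / 12) *
        jacobiTheta₂_term m ((k:ℤ) * w) (12 * w) := fun m ↦ term_eq k m w
  rw [tsum_congr this, tsum_mul_left, jacobiTheta₂]

/- ### The Gauss sum of the character mod 12 -/

noncomputable def zeta12 : ℂ := Complex.exp (2 * π * I / 12)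

lemma zeta12_ne_zero : zeta12 ≠ 0 := Complex.exp_ne_zero _

lemma zeta12_val : zeta12 = (Real.sqrt 3 + I) / 2 := by
  rw [zeta12, show (2 * (π:ℂ) * I / 12) = (↑(π / 6) : ℂ) * I by push_cast; ring,
    Complex.exp_mul_I, ← Complex.ofReal_cos, ← Complex.ofReal_sin]
  rw [Real.cos_pi_div_six, Real.sin_pi_div_six]
  push_cast
  ring

lemma sqrt3_sq : ((Real.sqrt 3 : ℝ) : ℂ) ^ 2 = 3 := by
  rw [← Complex.ofReal_pow, Real.sq_sqrt (by norm_num : (0:ℝ) ≤ 3)]; norm_num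

lemma zeta12_sq : zeta12 ^ 2 = (1 + Real.sqrt 3 * I) / 2 := by
  rw [zeta12_val]; linear_combination (1/4 : ℂ) * sqrt3_sq + (1/4 : ℂ) * I_sq

lemma zeta12_cube : zeta12 ^ 3 = I := by
  rw [show (3:ℕ) = 2 + 1 by norm_num, pow_add, zeta12_sq, pow_one, zeta12_val]
  linear_combination (I/4 : ℂ) * sqrt3_sq + ((Real.sqrt 3 : ℂ)/4) * I_sq

lemma zeta12_pow_six : zeta12 ^ 6 = -1 := by
  rw [show (6:ℕ) = 3 * 2 by norm_num, pow_mul, zeta12_cube, I_sq]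

lemma zeta12_pow_five : zeta12 ^ 5 = I * ((1 + Real.sqrt 3 * I) / 2) := by
  rw [show (5:ℕ) = 3 + 2 by norm_num, pow_add, zeta12_cube, zeta12_sq]

lemma zeta12_pow_seven : zeta12 ^ 7 = -zeta12 := by
  rw [show (7:ℕ) = 6 + 1 by norm_num, pow_add, zeta12_pow_six, pow_one]; ring

lemma zeta12_pow_eleven : zeta12 ^ 11 = -(I * ((1 + Real.sqrt 3 * I) / 2)) := by
  rw [show (11:ℕ) = 6 + 5 by norm_num, pow_add, zeta12_pow_six, zeta12_pow_five]; ring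

lemma sqrt12_eq : (Real.sqrt 12 : ℂ) = 2 * (Real.sqrt 3 : ℂ) := by
  rw [show (12:ℝ) = 2^2 * 3 by norm_num, Real.sqrt_mul (by positivity),
    Real.sqrt_sq (by norm_num : (0:ℝ) ≤ 2)]
  push_cast; ring

lemma key_gauss : zeta12 ^ 1 - zeta12 ^ 5 - zeta12 ^ 7 + zeta12 ^ 11 = (Real.sqrt 12 : ℂ) := by
  rw [sqrt12_eq, pow_one, zeta12_pow_five, zeta12_pow_seven, zeta12_pow_eleven, zeta12_val]
  linear_combination (-(Real.sqrt 3 : ℂ)) * I_sq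

lemma zeta12_pow_twelve : zeta12 ^ (12 : ℤ) = 1 := by
  rw [zeta12, ← Complex.exp_int_mul]
  rw [show ((12:ℤ):ℂ) * (2 * π * I / 12) = 2 * π * I by push_cast; ring]
  exact Complex.exp_two_pi_mul_I

lemma zeta12_zpow_emod (a : ℤ) : zeta12 ^ a = zeta12 ^ (a % 12) := by
  conv_lhs => rw [show a = 12 * (a / 12) + a % 12 by omega]
  rw [zpow_add₀ zeta12_ne_zero, zpow_mul, zeta12_pow_twelve, one_zpow, one_mul]

lemma exp_eq_zeta (n m : ℤ) :
    Complex.exp (2 * π * I * n * (m:ℂ) / 12) = zeta12 ^ ((n * m) % 12) := by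
  rw [show 2 * (π:ℂ) * I * n * m / 12 = ((n * m : ℤ):ℂ) * (2 * π * I / 12) by push_cast; ring,
    Complex.exp_int_mul, ← zeta12_zpow_emod]
  rfl

lemma gauss_sum (n : ℤ) :
    ∑ k : Fin 12, chiTwelve (k:ℤ) * Complex.exp (2 * π * I * n * ((k:ℤ):ℂ) / 12)
      = (Real.sqrt 12 : ℂ) * chiTwelve n := by
  simp only [Fin.sum_univ_succ, Finset.univ_eq_empty, Finset.sum_empty, Fin.sum_univ_zero]
  norm_num [chiTwelve]
  have key : ∀ m : ℤ, Complex.exp (2 * π * I * (n:ℂ) * (m:ℂ) / 12)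
      = zeta12 ^ ((n % 12 * m) % 12) := by
    intro m
    rw [exp_eq_zeta, Int.mul_emod n m 12, Int.mul_emod (n % 12) m 12,
      Int.emod_emod_of_dvd n dvd_rfl]
  have e1 : Complex.exp (2 * (π:ℂ) * I * n / 12) = zeta12 ^ ((n % 12 * 1) % 12) := by
    rw [← key 1]; congr 1; push_cast; ring
  have e5 : Complex.exp (2 * (π:ℂ) * I * n * 5 / 12) = zeta12 ^ ((n % 12 * 5) % 12) := by
    rw [← key 5]; norm_num
  have e7 : Complex.exp (2 * (π:ℂ) * I * n * 7 / 12) = zeta12 ^ ((n % 12 * 7) % 12) := by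
    rw [← key 7]; norm_num
  have e11 : Complex.exp (2 * (π:ℂ) * I * n * 11 / 12) = zeta12 ^ ((n % 12 * 11) % 12) := by
    rw [← key 11]; norm_num
  rw [e1, e5, e7, e11]
  have h : n % 12 = 0 ∨ n % 12 = 1 ∨ n % 12 = 2 ∨ n % 12 = 3 ∨ n % 12 = 4 ∨ n % 12 = 5 ∨
      n % 12 = 6 ∨ n % 12 = 7 ∨ n % 12 = 8 ∨ n % 12 = 9 ∨ n % 12 = 10 ∨ n % 12 = 11 := by
    omega
  rcases h with h|h|h|h|h|h|h|h|h|h|h|h <;> rw [h] <;> norm_num [zpow_ofNat]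
  all_goals try ring
  all_goals try linear_combination key_gauss
  all_goals linear_combination -key_gauss

/- ### cpow lemmas -/

lemma cpow_half_ofReal_mul {r : ℝ} (hr : 0 < r) {z : ℂ} (hz : z ≠ 0) :
    ((r:ℂ) * z) ^ (1/2 : ℂ) = (r:ℂ) ^ (1/2:ℂ) * z ^ (1/2:ℂ) := by
  have hr' : (r:ℂ) ≠ 0 := ofReal_ne_zero.2 hr.ne'
  rw [Complex.cpow_def_of_ne_zero (mul_ne_zero hr' hz), Complex.cpow_def_of_ne_zero hr',
    Complex.cpow_def_of_ne_zero hz, Complex.log_ofReal_mul hr hz, ← Complex.exp_add]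
  congr 1
  rw [Complex.ofReal_log hr.le]
  ring

lemma cpow_half_twelve : ((12:ℝ):ℂ) ^ (1/2 : ℂ) = (Real.sqrt 12 : ℂ) := by
  rw [Real.sqrt_eq_rpow, Complex.ofReal_cpow (by norm_num : (0:ℝ) ≤ 12) (1/2 : ℝ)]
  norm_num

/- ### theta resummation via the Gauss sum -/

lemma theta_term_split (n : ℤ) (k : Fin 12) (τ : ℂ) :
    jacobiTheta₂_term n (((k:ℤ):ℂ) / 12) (τ / 12)
      = Complex.exp (2 * π * I * n * ((k:ℤ):ℂ) / 12) *
        Complex.exp (2 * π * I * τ * (n:ℂ) ^ 2 / 24) := by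
  rw [jacobiTheta₂_term, ← Complex.exp_add]
  congr 1
  ring

lemma gauss_resum {τ : ℂ} (hτ : 0 < τ.im) :
    ∑ k : Fin 12, chiTwelve (k:ℤ) * jacobiTheta₂ (((k:ℤ):ℂ) / 12) (τ / 12)
      = (Real.sqrt 12 : ℂ) *
          ∑' n : ℤ, chiTwelve n * Complex.exp (2 * π * I * τ * (n:ℂ) ^ 2 / 24) := by
  have hτ12 : 0 < (τ / 12).im := by rw [div_ofNat_im]; positivity
  have hsum : ∀ k : Fin 12,
      Summable (fun n : ℤ ↦ chiTwelve (k:ℤ) * jacobiTheta₂_term n (((k:ℤ):ℂ) / 12) (τ / 12)) :=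
    fun k ↦ ((summable_jacobiTheta₂_term_iff _ _).2 hτ12).mul_left _
  have h1 : ∀ k : Fin 12, chiTwelve (k:ℤ) * jacobiTheta₂ (((k:ℤ):ℂ) / 12) (τ / 12)
      = ∑' n : ℤ, chiTwelve (k:ℤ) * jacobiTheta₂_term n (((k:ℤ):ℂ) / 12) (τ / 12) := by
    intro k
    rw [jacobiTheta₂, tsum_mul_left]
  rw [Finset.sum_congr rfl fun k _ ↦ h1 k]
  rw [← Summable.tsum_finsetSum (fun k _ ↦ hsum k)]
  rw [tsum_congr (fun n : ℤ ↦ ?_), tsum_mul_left]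
  calc ∑ k : Fin 12, chiTwelve (k:ℤ) * jacobiTheta₂_term n (((k:ℤ):ℂ) / 12) (τ / 12)
      = (∑ k : Fin 12, chiTwelve (k:ℤ) * Complex.exp (2 * π * I * n * ((k:ℤ):ℂ) / 12)) *
          Complex.exp (2 * π * I * τ * (n:ℂ) ^ 2 / 24) := by
        rw [Finset.sum_mul]
        exact Finset.sum_congr rfl fun k _ ↦ by rw [theta_term_split]; ring
    _ = (Real.sqrt 12 : ℂ) * (chiTwelve n * Complex.exp (2 * π * I * τ * (n:ℂ) ^ 2 / 24)) := by
        rw [gauss_sum]; ring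

/- ### main theorem -/

/-- the transformation formula `√(i/τ) η(−1/τ) = η(τ)` for `Im τ > 0`,
where the principal branch of the square root is used. -/
theorem dedekindEta_inversion (τ : ℂ) (hτ : 0 < τ.im) :
    (I / τ) ^ (1 / 2 : ℂ) * dedekindEta (-1 / τ) = dedekindEta τ := by
  have hτ0 : τ ≠ 0 := by intro h; rw [h] at hτ; simp at hτ
  have hτ' : 0 < (-1 / τ).im := by
    have h : (-1 / τ).im = τ.im / normSq τ := by
      rw [neg_div, neg_im, one_div, inv_im]; ring
    rw [h]
    exact div_pos hτ (normSq_pos.2 hτ0)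
  have hm1τ : (-1 / τ : ℂ) ≠ 0 := div_ne_zero (by norm_num) hτ0
  have hIτ : (I / τ : ℂ) ≠ 0 := div_ne_zero I_ne_zero hτ0
  rw [dedekindEta, dedekindEta, decompF hτ']
  have hFE : ∀ k : Fin 12,
      chiTwelve (k:ℤ) * Complex.exp (π * I * ((k:ℤ):ℂ) ^ 2 * (-1/τ) / 12) *
          jacobiTheta₂ (((k:ℤ):ℂ) * (-1/τ)) (12 * (-1/τ))
      = (1 / (((12:ℝ):ℂ) * (I/τ)) ^ (1/2 : ℂ)) *
          (chiTwelve (k:ℤ) * jacobiTheta₂ (((k:ℤ):ℂ) / 12) (τ / 12)) := by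
    intro k
    have hFEk := jacobiTheta₂_functional_equation (((k:ℤ):ℂ) * (-1/τ)) (12 * (-1/τ))
    have ha : -I * (12 * (-1/τ)) = ((12:ℝ):ℂ) * (I/τ) := by push_cast; field_simp
    have hb : ((k:ℤ):ℂ) * (-1/τ) / (12 * (-1/τ)) = ((k:ℤ):ℂ) / 12 := by
      rw [mul_div_mul_right _ _ hm1τ]
    have hc : -1 / (12 * (-1/τ)) = τ / 12 := by field_simp
    rw [hFEk, ha, hb, hc]
    have he : Complex.exp (π * I * ((k:ℤ):ℂ) ^ 2 * (-1/τ) / 12) *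
        Complex.exp (-π * I * (((k:ℤ):ℂ) * (-1/τ)) ^ 2 / (12 * (-1/τ))) = 1 := by
      rw [← Complex.exp_add, show (π:ℂ) * I * ((k:ℤ):ℂ) ^ 2 * (-1/τ) / 12 +
        -π * I * (((k:ℤ):ℂ) * (-1/τ)) ^ 2 / (12 * (-1/τ)) = 0 by field_simp; ring]
      exact Complex.exp_zero
    linear_combination (chiTwelve (k:ℤ) * jacobiTheta₂ (((k:ℤ):ℂ) / 12) (τ / 12) /
      (((12:ℝ):ℂ) * (I/τ)) ^ (1/2 : ℂ)) * he
  rw [Finset.sum_congr rfl fun k _ ↦ hFE k, ← Finset.mul_sum, gauss_resum hτ]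
  have hsplit : (((12:ℝ):ℂ) * (I/τ)) ^ (1/2 : ℂ)
      = (Real.sqrt 12 : ℂ) * (I/τ) ^ (1/2 : ℂ) := by
    rw [cpow_half_ofReal_mul (by norm_num : (0:ℝ) < 12) hIτ, cpow_half_twelve]
  rw [hsplit]
  have h1 : ((I/τ) ^ (1/2 : ℂ) : ℂ) ≠ 0 := by
    simp [Complex.cpow_eq_zero_iff, hIτ]
  have h2 : (Real.sqrt 12 : ℂ) ≠ 0 := by
    simp [Real.sqrt_ne_zero']
  field_simp
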